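/- For u(z) = log(|z₁|² + |z₂|^{1/2}) on the unit ball B ⊂ ℂ², the sublevel set {u < 2 log R} = {|z₁|² + |z₂|^{1/2} < R²} has volume 2π² ∫_0^R (R² − r²)⁴ r dr = (π²/5) R^{10}, and consequently ν_û(0) = lim_{R→0} 2 log R / ((1/4)(log R^{10} + O(1))) = 4/5 for the Schwarz symmetrization û. -/

import Mathlib

open MeasureTheory Metric Filter Topology
open scoped ENNReal Topology

noncomputable section

abbrev Cn (n : ℕ) := EuclideanSpace ℂ (Fin n)
abbrev Rn (N : ℕ) := EuclideanSpace ℝ (Fin N)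

instance (n : ℕ) : MeasurableSpace (Cn n) := MeasurableSpace.comap WithLp.ofLp MeasurableSpace.pi
instance (n : ℕ) : BorelSpace (Cn n) := PiLp.borelSpace _
instance (n : ℕ) : MeasureSpace (Cn n) := ⟨Measure.map (WithLp.toLp 2) (MeasureTheory.Measure.pi fun _ => volume)⟩

/-- Circle mean of the truncation `max f (-m)` of an `EReal`-valued function. -/
def circleTruncMean (f : ℂ → EReal) (c : ℂ) (r : ℝ) (m : ℕ) : ℝ :=
  (2 * Real.pi)⁻¹ *
    ∫ θ in (0:ℝ)..(2 * Real.pi),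
      (max (f (c + (r : ℂ) * Complex.exp ((θ : ℂ) * Complex.I))) ((-(m : ℝ) : ℝ) : EReal)).toReal

/-- Circle mean of an `EReal`-valued function, as the decreasing limit of truncated means. -/
def circleMean (f : ℂ → EReal) (c : ℂ) (r : ℝ) : EReal :=
  ⨅ m : ℕ, ((circleTruncMean f c r m : ℝ) : EReal)

/-- Subharmonicity (EReal-valued, sub-mean value property) on a subset of ℂ. -/
def SubharmonicOn' (f : ℂ → EReal) (s : Set ℂ) : Prop :=
  UpperSemicontinuousOn f s ∧
    ∀ c r, 0 < r → closedBall c r ⊆ s → f c ≤ circleMean f c r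

/-- Plurisubharmonicity: upper semicontinuity plus the sub-mean value property
along every complex line. -/
def PlurisubharmonicOn {n : ℕ} (u : Cn n → EReal) (s : Set (Cn n)) : Prop :=
  UpperSemicontinuousOn u s ∧
    ∀ (z w : Cn n) (c : ℂ) (r : ℝ), 0 < r →
      (∀ l : ℂ, dist l c ≤ r → z + l • w ∈ s) →
      u (z + c • w) ≤ circleMean (fun l => u (z + l • w)) c r

/-- `S¹`-invariance of `u` on `s` : `u (e^{iθ} z) = u z`. -/
def S1InvariantOn {n : ℕ} (u : Cn n → EReal) (s : Set (Cn n)) : Prop :=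
  ∀ (θ : ℝ), ∀ z ∈ s, u (Complex.exp ((θ : ℂ) * Complex.I) • z) = u z

/-- The Lelong number of `u` at `x`, as `lim_{r→0} (sup_{B_r(x)} u)/log r`. -/
def lelong {n : ℕ} (u : Cn n → EReal) (x : Cn n) : ℝ :=
  liminf (fun r : ℝ => (⨆ w ∈ ball x r, u w).toReal / Real.log r) (𝓝[>] (0:ℝ))

/-- The exponential of an extended real number, valued in `ℝ≥0∞`. -/
def expE (x : EReal) : ℝ≥0∞ :=
  if x = ⊥ then 0 else if x = ⊤ then ⊤ else ENNReal.ofReal (Real.exp x.toReal)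

/-- The complex singularity exponent of `u` over a set `s`:
`sup { c ≥ 0 : e^{-2cu} ∈ L¹(s) }`. -/
def cseOn {n : ℕ} (u : Cn n → EReal) (s : Set (Cn n)) : ℝ :=
  sSup {c : ℝ | 0 ≤ c ∧ ∫⁻ x in s, expE ((((-2 : ℝ) * c : ℝ) : EReal) * u x) < ⊤}

/-- The complex singularity exponent of `u` at a point `x`:
`sup { c ≥ 0 : e^{-2cu} ∈ L¹(U) for some neighbourhood U of x }`. -/
def csePt {n : ℕ} (u : Cn n → EReal) (x : Cn n) : ℝ :=
  sSup {c : ℝ | 0 ≤ c ∧ ∃ U ∈ 𝓝 x, ∫⁻ y in U, expE ((((-2 : ℝ) * c : ℝ) : EReal) * u y) < ⊤}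

/-- The integrability index: the inverse of the complex singularity exponent. -/
def iota {n : ℕ} (u : Cn n → EReal) (x : Cn n) : ℝ := (csePt u x)⁻¹

/-- The increasing rearrangement `u_*(s) = inf { t : |{u < t}| > s }` (real-valued case). -/
def rearr {N : ℕ} (u : Rn N → ℝ) (Ω : Set (Rn N)) (s : ℝ) : ℝ :=
  sInf {t : ℝ | ENNReal.ofReal s < volume {x ∈ Ω | u x < t}}

/-- The essential supremum of a real-valued function on `Ω`. -/
def essSupR {N : ℕ} (u : Rn N → ℝ) (Ω : Set (Rn N)) : ℝ :=
  sInf {t : ℝ | volume {x ∈ Ω | t < u x} = 0}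

/-- The increasing rearrangement on `[0,|Ω|]`, equal to `ess sup u` at `s = |Ω|`. -/
def rearrFull {N : ℕ} (u : Rn N → ℝ) (Ω : Set (Rn N)) (s : ℝ) : ℝ :=
  if s < (volume Ω).toReal then rearr u Ω s else essSupR u Ω

/-- The increasing rearrangement (EReal-valued case on ℂⁿ). -/
def rearrE {n : ℕ} (u : Cn n → EReal) (Ω : Set (Cn n)) (s : ℝ) : EReal :=
  sInf ((fun t : ℝ => (t : EReal)) ''
    {t : ℝ | ENNReal.ofReal s < volume {x ∈ Ω | u x < (t : EReal)}})

/-- The Schwarz symmetrization `û(x) = u_*(a_N |x|^N)` (real-valued case). -/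
def schwarz {N : ℕ} (u : Rn N → ℝ) (Ω : Set (Rn N)) (x : Rn N) : ℝ :=
  rearr u Ω ((volume (ball (0 : Rn N) ‖x‖)).toReal)

/-- The Schwarz symmetrization `û(x) = u_*(a_{2n} |x|^{2n})` (EReal-valued case on ℂⁿ). -/
def schwarzE {n : ℕ} (u : Cn n → EReal) (Ω : Set (Cn n)) (x : Cn n) : EReal :=
  rearrE u Ω ((volume (ball (0 : Cn n) ‖x‖)).toReal)


open scoped Classical

/-- The function `u(z) = log(|z₁|² + |z₂|^{1/2})` on `ℂ²` (with value `−∞` at `0`). -/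
def u19 : Cn 2 → EReal := fun z =>
  if z = 0 then (⊥ : EReal)
  else ((Real.log (‖z 0‖ ^ 2 + ‖z 1‖ ^ ((1 : ℝ) / 2)) : ℝ) : EReal)

lemma vol_radial (F : ℝ → ℝ) (hFc : Continuous F) (hF0 : ∀ r, 0 ≤ F r) (r₀ : ℝ)
    (hsupp : ∀ r, r₀ ≤ r → F r = 0) :
    volume {z : Cn 2 | ‖z 1‖ < F (‖z 0‖)}
      = ENNReal.ofReal (2 * Real.pi ^ 2 * ∫ r in Set.Ioi (0:ℝ), r * F r ^ 2) := by
  set S : Set (ℂ × ℂ) := {p | ‖p.2‖ < F (‖p.1‖)} with hSdef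
  have hSopen : IsOpen S := by
    apply isOpen_lt (continuous_norm.comp continuous_snd)
      (hFc.comp (continuous_norm.comp continuous_fst))
  have hSm : MeasurableSet S := hSopen.measurableSet
  have h2 : volume {z : Cn 2 | ‖z 1‖ < F (‖z 0‖)}
      = (volume.prod volume) S := by
    have hm : Measurable (WithLp.toLp 2 : (Fin 2 → ℂ) → Cn 2) := fun s hs => by
      obtain ⟨t, ht, rfl⟩ := hs
      exact ht
    have hmo : Measurable (WithLp.ofLp : Cn 2 → (Fin 2 → ℂ)) := measurable_iff_comap_le.2 le_rfl
    rw [show (volume : Measure (Cn 2)) = Measure.map (WithLp.toLp 2)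
      (Measure.pi fun _ => volume) from rfl,
      Measure.map_apply hm]
    have := (measurePreserving_piFinTwo (fun _ : Fin 2 => (volume : Measure ℂ))).measure_preimage_equiv S
    exact this
    exact ((MeasurableEquiv.piFinTwo (fun _ : Fin 2 => ℂ)).measurable.comp hmo) hSm
  rw [h2, Measure.prod_apply hSm]
  have hsec : ∀ x : ℂ, volume (Prod.mk x ⁻¹' S)
      = ENNReal.ofReal (Real.pi * F (‖x‖) ^ 2) := by
    intro x
    have : Prod.mk x ⁻¹' S = ball (0:ℂ) (F (‖x‖)) := by
      ext y
      simp [hSdef, mem_ball, Complex.dist_eq]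
    rw [this, Complex.volume_ball]
    rw [← ENNReal.ofReal_pow (hF0 _), ← ENNReal.ofReal_coe_nnreal,
      ← ENNReal.ofReal_mul (by positivity), NNReal.coe_real_pi, mul_comm]
  simp_rw [hsec]
  have hg : Continuous (fun x : ℂ => Real.pi * F (‖x‖) ^ 2) := by
    continuity
  have hcs : HasCompactSupport (fun x : ℂ => Real.pi * F (‖x‖) ^ 2) := by
    apply HasCompactSupport.intro (isCompact_closedBall (0:ℂ) (max r₀ 0))
    intro x hx
    have h1 : ¬ ‖x‖ ≤ max r₀ 0 := by
      simpa [Metric.mem_closedBall, dist_zero_right] using hx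
    rw [hsupp _ (le_trans (le_max_left _ _) (not_le.1 h1).le)]
    ring
  rw [← MeasureTheory.ofReal_integral_eq_lintegral_ofReal
    (hg.integrable_of_hasCompactSupport hcs)
    (Filter.Eventually.of_forall fun x => by positivity)]
  congr 1
  have := MeasureTheory.integral_fun_norm_addHaar (volume : Measure ℂ)
    (fun s => Real.pi * F s ^ 2)
  rw [this]
  have hdim : Module.finrank ℝ ℂ = 2 := Complex.finrank_real_complex
  rw [hdim]
  have hball : volume.real (ball (0:ℂ) 1) = Real.pi := by
    rw [measureReal_def, Complex.volume_ball]
    simp [ENNReal.toReal_mul]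
  rw [hball]
  simp only [smul_eq_mul, nsmul_eq_mul]
  rw [← MeasureTheory.integral_const_mul, ← MeasureTheory.integral_const_mul]
  rw [← MeasureTheory.integral_const_mul]
  congr 1
  ext r
  ring

lemma int_eval (R : ℝ) (n : ℕ) :
    ∫ r in (0:ℝ)..R, (R^2 - r^2)^n * r = (R^2)^(n+1) / (2*(n+1)) := by
  have h : ∀ x ∈ Set.uIcc (0:ℝ) R,
      HasDerivAt (fun r => -(R^2 - r^2)^(n+1) / (2*(n+1))) ((R^2 - x^2)^n * x) x := by
    intro x _
    have h1 : HasDerivAt (fun r : ℝ => R^2 - r^2) (-(2*x)) x := by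
      simpa using ((hasDerivAt_pow 2 x).const_sub (R^2))
    have h2 := (h1.pow (n+1)).neg.div_const (2*(n+1))
    refine HasDerivAt.congr_deriv h2 ?_
    rw [div_eq_iff (by positivity), Nat.add_sub_cancel]
    push_cast
    ring
  have hi : IntervalIntegrable (fun r => (R^2 - r^2)^n * r) volume 0 R :=
    (Continuous.mul (by continuity) continuous_id).intervalIntegrable _ _
  rw [intervalIntegral.integral_eq_sub_of_hasDerivAt h hi]
  simp
  ring

lemma ioi_to_interval (G : ℝ → ℝ) (R : ℝ) (hR : 0 < R) (hG : Continuous G)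
    (hzero : ∀ r, R ≤ r → G r = 0) :
    ∫ r in Set.Ioi (0:ℝ), G r = ∫ r in (0:ℝ)..R, G r := by
  have hsplit : Set.Ioi (0:ℝ) = Set.Ioc 0 R ∪ Set.Ioi R := (Set.Ioc_union_Ioi_eq_Ioi hR.le).symm
  have hzero' : ∫ r in Set.Ioi R, G r = 0 := by
    rw [MeasureTheory.setIntegral_eq_zero_of_forall_eq_zero]
    intro x hx
    exact hzero x (le_of_lt hx)
  rw [hsplit, MeasureTheory.setIntegral_union (Set.Ioc_disjoint_Ioi le_rfl)
    measurableSet_Ioi (hG.integrableOn_Ioc) ?_, hzero', add_zero,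
    intervalIntegral.integral_of_le hR.le]
  · exact (MeasureTheory.integrableOn_congr_fun (fun x hx => hzero x (le_of_lt hx))
      measurableSet_Ioi).2 (MeasureTheory.integrableOn_zero)

lemma volA (R : ℝ) (hR : 0 < R) :
    volume {z : Cn 2 | ‖z 0‖ ^ 2 + ‖z 1‖ ^ ((1:ℝ)/2) < R ^ 2}
      = ENNReal.ofReal (2 * Real.pi ^ 2 * ∫ r in (0:ℝ)..R, (R^2 - r^2)^4 * r) := by
  have hset : {z : Cn 2 | ‖z 0‖ ^ 2 + ‖z 1‖ ^ ((1:ℝ)/2) < R ^ 2}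
      = {z : Cn 2 | ‖z 1‖ < (max (R^2 - ‖z 0‖^2) 0)^2} := by
    ext z
    simp only [Set.mem_setOf_eq, ← Real.sqrt_eq_rpow]
    constructor
    · intro h
      have hd : 0 < R^2 - ‖z 0‖^2 := by
        have := Real.sqrt_nonneg (‖z 1‖); linarith
      rw [max_eq_left hd.le]
      have h2 : Real.sqrt (‖z 1‖) < R^2 - ‖z 0‖^2 := by linarith
      calc ‖z 1‖ = Real.sqrt (‖z 1‖) ^ 2 :=
            (Real.sq_sqrt (norm_nonneg _)).symm
        _ < (R^2 - ‖z 0‖^2)^2 := by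
            apply pow_lt_pow_left₀ h2 (Real.sqrt_nonneg _) (by norm_num)
    · intro h
      have hd : 0 < R^2 - ‖z 0‖^2 := by
        by_contra hc
        push_neg at hc
        rw [max_eq_right (by linarith)] at h
        simpa using lt_of_le_of_lt (norm_nonneg _) h
      rw [max_eq_left hd.le] at h
      have h2 : Real.sqrt (‖z 1‖) < R^2 - ‖z 0‖^2 := by
        rw [show (R^2 - ‖z 0‖^2) = Real.sqrt ((R^2 - ‖z 0‖^2)^2) from
          (Real.sqrt_sq hd.le).symm]
        exact Real.sqrt_lt_sqrt (norm_nonneg _) h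
      linarith
  rw [hset, vol_radial (fun s => (max (R^2 - s^2) 0)^2) (by continuity) (fun r => by positivity) R
    (fun r hr => by
      show (max (R^2 - r^2) 0)^2 = 0
      have : R^2 - r^2 ≤ 0 := by nlinarith
      rw [max_eq_right this]; ring)]
  congr 1
  rw [ioi_to_interval _ R hR (by continuity)
    (fun r hr => by
      have : R^2 - r^2 ≤ 0 := by nlinarith
      rw [max_eq_right this]; ring)]
  congr 1
  apply intervalIntegral.integral_congr
  intro r hr
  rw [Set.uIcc_of_le hR.le] at hr
  have h1 : 0 ≤ R^2 - r^2 := by nlinarith [hr.1, hr.2]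
  simp only [max_eq_left h1]
  ring

lemma volB (ρ : ℝ) (hρ : 0 < ρ) :
    volume (ball (0 : Cn 2) ρ) = ENNReal.ofReal (Real.pi^2 / 2 * ρ^4) := by
  have hset : ball (0 : Cn 2) ρ
      = {z : Cn 2 | ‖z 1‖ < Real.sqrt (max (ρ^2 - ‖z 0‖^2) 0)} := by
    ext z
    simp only [mem_ball, dist_zero_right, Set.mem_setOf_eq]
    rw [EuclideanSpace.norm_eq]
    rw [Fin.sum_univ_two]
    rw [Real.sqrt_lt' hρ]
    constructor
    · intro h
      have hd : 0 < ρ^2 - ‖z 0‖^2 := by nlinarith [sq_nonneg (‖z 1‖)]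
      rw [max_eq_left hd.le, show ‖z 1‖ = Real.sqrt (‖z 1‖^2) from
        (Real.sqrt_sq (norm_nonneg _)).symm]
      exact Real.sqrt_lt_sqrt (sq_nonneg _) (by linarith)
    · intro h
      have hd : 0 < ρ^2 - ‖z 0‖^2 := by
        by_contra hc
        push_neg at hc
        rw [max_eq_right (by linarith), Real.sqrt_zero] at h
        simpa using lt_of_le_of_lt (norm_nonneg _) h
      rw [max_eq_left hd.le] at h
      have := (Real.lt_sqrt (norm_nonneg _)).1 h
      linarith
  rw [hset, vol_radial (fun s => Real.sqrt (max (ρ^2 - s^2) 0)) (by fun_prop) (fun r => Real.sqrt_nonneg _) ρ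
    (fun r hr => by
      show Real.sqrt (max (ρ^2 - r^2) 0) = 0
      have : ρ^2 - r^2 ≤ 0 := by nlinarith
      rw [max_eq_right this, Real.sqrt_zero])]
  congr 1
  rw [ioi_to_interval _ ρ hρ (by fun_prop)
    (fun r hr => by
      have : ρ^2 - r^2 ≤ 0 := by nlinarith
      rw [max_eq_right this, Real.sqrt_zero]; ring)]
  have : ∀ r ∈ Set.uIcc (0:ℝ) ρ, r * Real.sqrt (max (ρ^2 - r^2) 0) ^ 2 = (ρ^2 - r^2)^1 * r := by
    intro r hr
    rw [Set.uIcc_of_le hρ.le] at hr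
    have h1 : 0 ≤ ρ^2 - r^2 := by nlinarith [hr.1, hr.2]
    rw [Real.sq_sqrt (le_max_of_le_left h1), max_eq_left h1]
    ring
  rw [intervalIntegral.integral_congr this, int_eval]
  norm_num
  ring

lemma u19_zero_ne (z : Cn 2) (hz : z ≠ 0) :
    0 < ‖z 0‖ ^ 2 + ‖z 1‖ ^ ((1:ℝ)/2) := by
  rcases (by
    by_contra hc
    push_neg at hc
    apply hz
    ext i
    fin_cases i <;> simpa using hc _ : ∃ i, z i ≠ 0) with ⟨i, hi⟩
  have h0 : (0:ℝ) ≤ ‖z 0‖ ^ 2 := sq_nonneg _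
  have h1 : (0:ℝ) ≤ ‖z 1‖ ^ ((1:ℝ)/2) := Real.rpow_nonneg (norm_nonneg _) _
  fin_cases i
  · have hz0 : z 0 ≠ 0 := hi
    have : 0 < ‖z 0‖ ^ 2 := pow_pos (norm_pos_iff.2 hz0) 2
    linarith
  · have hz1 : z 1 ≠ 0 := hi
    have : 0 < ‖z 1‖ ^ ((1:ℝ)/2) :=
      Real.rpow_pos_of_pos (norm_pos_iff.2 hz1) _
    linarith

lemma sublevel_eq (R : ℝ) (hR0 : 0 < R) (hR1 : R < 1) :
    {z ∈ ball (0 : Cn 2) 1 | u19 z < ((2 * Real.log R : ℝ) : EReal)}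
      = {z : Cn 2 | ‖z 0‖ ^ 2 + ‖z 1‖ ^ ((1:ℝ)/2) < R ^ 2} := by
  have hlog : (2 * Real.log R) = Real.log (R^2) := by
    rw [Real.log_pow]; norm_num
  ext z
  simp only [Set.mem_setOf_eq, Set.mem_sep_iff]
  constructor
  · rintro ⟨_, hu⟩
    by_cases hz : z = 0
    · subst hz
      have h0 : (0 : Cn 2) 0 = 0 := rfl
      have h1 : (0 : Cn 2) 1 = 0 := rfl
      rw [h0, h1]
      simp [Real.zero_rpow (by norm_num : ((1:ℝ)/2) ≠ 0)]
      positivity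
    · have hA := u19_zero_ne z hz
      rw [u19, if_neg hz, EReal.coe_lt_coe_iff, hlog] at hu
      have := (Real.log_lt_log_iff hA (by positivity)).1 hu
      exact this
  · intro h
    have hR2 : R^2 < 1 := by nlinarith
    have hs : Real.sqrt (‖z 1‖) < 1 := by
      rw [← Real.sqrt_eq_rpow] at h
      nlinarith [sq_nonneg (‖z 0‖), Real.sqrt_nonneg (‖z 1‖)]
    have habs1 : ‖z 1‖ < 1 := by
      nlinarith [Real.sq_sqrt (norm_nonneg (z 1)), Real.sqrt_nonneg (‖z 1‖)]
    have hle : ‖z 1‖ ≤ Real.sqrt (‖z 1‖) :=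
      (Real.le_sqrt (norm_nonneg _) (norm_nonneg _)).2 (by nlinarith [norm_nonneg (z 1)])
    refine ⟨?_, ?_⟩
    · rw [mem_ball, dist_zero_right, EuclideanSpace.norm_eq, Fin.sum_univ_two]
      rw [Real.sqrt_lt' one_pos]
      rw [← Real.sqrt_eq_rpow] at h
      nlinarith [norm_nonneg (z 1)]
    · by_cases hz : z = 0
      · rw [u19, if_pos hz]; exact EReal.bot_lt_coe _
      · rw [u19, if_neg hz, EReal.coe_lt_coe_iff, hlog]
        exact Real.log_lt_log (u19_zero_ne z hz) h

lemma vol_sublevel (R : ℝ) (hR0 : 0 < R) (hR1 : R < 1) :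
    volume {z ∈ ball (0 : Cn 2) 1 | u19 z < ((2 * Real.log R : ℝ) : EReal)}
      = ENNReal.ofReal (2 * Real.pi ^ 2 * ∫ r in (0:ℝ)..R, (R ^ 2 - r ^ 2) ^ 4 * r) := by
  rw [sublevel_eq R hR0 hR1, volA R hR0]

lemma int_val (R : ℝ) : 2 * Real.pi ^ 2 * (∫ r in (0:ℝ)..R, (R ^ 2 - r ^ 2) ^ 4 * r)
    = Real.pi ^ 2 / 5 * R ^ 10 := by
  rw [int_eval R 4]
  norm_num
  ring

lemma tendsto_inv_atBot_zero' : Tendsto (fun t : ℝ => t⁻¹) atBot (𝓝 (0:ℝ)) := by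
  have h := ((tendsto_inv_atTop_zero (𝕜 := ℝ)).comp tendsto_neg_atBot_atTop).neg
  rw [neg_zero] at h
  refine h.congr fun t => ?_
  simp [Function.comp, inv_neg]

lemma tendsto_ratio (a b c d : ℝ) (hd : 0 < d) :
    Tendsto (fun t : ℝ => (a + b*t)/(c + d*t)) atBot (𝓝 (b/d)) := by
  have h0 : Tendsto (fun t : ℝ => a * t⁻¹ + b) atBot (𝓝 b) := by
    simpa using (tendsto_inv_atBot_zero'.const_mul a).add_const b
  have h1 : Tendsto (fun t : ℝ => c * t⁻¹ + d) atBot (𝓝 d) := by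
    simpa using (tendsto_inv_atBot_zero'.const_mul c).add_const d
  refine (h0.div h1 hd.ne').congr' ?_
  filter_upwards [eventually_lt_atBot (min (-(|c|+1)/d) 0)] with t ht
  have ht0 : t < 0 := lt_of_lt_of_le ht (min_le_right _ _)
  have ht1 : t < -(|c|+1)/d := lt_of_lt_of_le ht (min_le_left _ _)
  have hdt : t * d < -(|c|+1) := (lt_div_iff₀ hd).1 ht1
  have habs : c ≤ |c| := le_abs_self c
  have hcd : c + d*t ≠ 0 := by nlinarith
  have hden : c * t⁻¹ + d ≠ 0 := by
    have h2 : c * t⁻¹ + d = (c + d*t) * t⁻¹ := by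
      have htt : t * t⁻¹ = 1 := mul_inv_cancel₀ ht0.ne
      field_simp
      linear_combination (-d) * htt
    rw [h2]
    exact mul_ne_zero hcd (inv_ne_zero ht0.ne)
  show (a * t⁻¹ + b) / (c * t⁻¹ + d) = (a + b * t) / (c + d * t)
  rw [div_eq_div_iff hden hcd]
  have htt : t * t⁻¹ = 1 := mul_inv_cancel₀ ht0.ne
  field_simp
  linear_combination (a*d - b*c) * htt

lemma sInf_image_Ioi (a : ℝ) :
    sInf ((fun t : ℝ => (t : EReal)) '' Set.Ioi a) = (a : EReal) := by
  apply le_antisymm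
  · apply le_of_forall_gt_imp_ge_of_dense
    intro c hc
    obtain ⟨t, ht1, ht2⟩ := EReal.exists_between_coe_real hc
    exact le_trans (sInf_le ⟨t, EReal.coe_lt_coe_iff.1 ht1, rfl⟩) ht2.le
  · apply le_sInf
    rintro b ⟨t, ht, rfl⟩
    exact EReal.coe_le_coe_iff.2 (le_of_lt ht)

lemma vol_mono (t t' : ℝ) (h : t ≤ t') :
    volume {z ∈ ball (0 : Cn 2) 1 | u19 z < ((t : ℝ) : EReal)}
      ≤ volume {z ∈ ball (0 : Cn 2) 1 | u19 z < ((t' : ℝ) : EReal)} := by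
  apply measure_mono
  rintro z ⟨hz, hu⟩
  exact ⟨hz, lt_of_lt_of_le hu (EReal.coe_le_coe_iff.2 h)⟩

lemma vol_exp (t : ℝ) (ht : t < 0) :
    volume {z ∈ ball (0 : Cn 2) 1 | u19 z < ((t : ℝ) : EReal)}
      = ENNReal.ofReal (Real.pi ^ 2 / 5 * Real.exp (5 * t)) := by
  have h2 : (2 * Real.log (Real.exp (t/2)) : ℝ) = t := by rw [Real.log_exp]; ring
  have hR1 : Real.exp (t/2) < 1 := Real.exp_lt_one_iff.2 (by linarith)
  calc volume {z ∈ ball (0 : Cn 2) 1 | u19 z < ((t : ℝ) : EReal)}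
      = volume {z ∈ ball (0 : Cn 2) 1 |
          u19 z < ((2 * Real.log (Real.exp (t/2)) : ℝ) : EReal)} := by rw [h2]
    _ = ENNReal.ofReal (2 * Real.pi ^ 2 *
          ∫ r in (0:ℝ)..(Real.exp (t/2)), ((Real.exp (t/2)) ^ 2 - r ^ 2) ^ 4 * r) :=
        vol_sublevel _ (Real.exp_pos _) hR1
    _ = ENNReal.ofReal (Real.pi ^ 2 / 5 * Real.exp (5 * t)) := by
        rw [int_val]
        have hexp10 : Real.exp (t/2) ^ 10 = Real.exp (5*t) := by
          rw [← Real.exp_nat_mul]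
          congr 1
          push_cast
          ring
        rw [hexp10]

lemma lt_vol_of (t s : ℝ) (hs0 : 0 ≤ s) (hst : s < Real.pi ^ 2 / 5) (ht : 0 ≤ t) :
    ENNReal.ofReal s < volume {z ∈ ball (0 : Cn 2) 1 | u19 z < ((t : ℝ) : EReal)} := by
  set ε := (s + Real.pi ^ 2 / 5) / 2 with hεdef
  have hε1 : s < ε := by rw [hεdef]; linarith
  have hε2 : ε < Real.pi ^ 2 / 5 := by rw [hεdef]; linarith
  have hε0 : 0 < ε := by rw [hεdef]; nlinarith [Real.pi_pos]
  have harg : 0 < 5 * ε / Real.pi ^ 2 := by positivity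
  set t' := (1/5) * Real.log (5 * ε / Real.pi ^ 2) with ht'def
  have ht'neg : t' < 0 := by
    have : Real.log (5 * ε / Real.pi ^ 2) < 0 :=
      Real.log_neg harg (by rw [div_lt_one (by positivity)]; nlinarith)
    rw [ht'def]; linarith
  have hval : Real.pi ^ 2 / 5 * Real.exp (5 * t') = ε := by
    rw [show 5 * t' = Real.log (5 * ε / Real.pi ^ 2) by rw [ht'def]; ring,
      Real.exp_log harg]
    field_simp
  calc ENNReal.ofReal s < ENNReal.ofReal ε := (ENNReal.ofReal_lt_ofReal_iff hε0).2 hε1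
    _ = volume {z ∈ ball (0 : Cn 2) 1 | u19 z < ((t' : ℝ) : EReal)} := by
        rw [vol_exp t' ht'neg, hval]
    _ ≤ _ := vol_mono t' t (by linarith)

lemma rearr_val (s : ℝ) (hs0 : 0 < s) (hs : s < Real.pi ^ 2 / 5) :
    rearrE u19 (ball (0 : Cn 2) 1) s
      = (((1/5) * Real.log (5 * s / Real.pi ^ 2) : ℝ) : EReal) := by
  have hpi := Real.pi_pos
  set t₀ := (1/5) * Real.log (5 * s / Real.pi ^ 2) with ht₀def
  have harg : 0 < 5 * s / Real.pi ^ 2 := by positivity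
  have hexp : Real.exp (5 * t₀) = 5 * s / Real.pi ^ 2 := by
    rw [show 5 * t₀ = Real.log (5 * s / Real.pi ^ 2) by rw [ht₀def]; ring,
      Real.exp_log harg]
  have hval : Real.pi ^ 2 / 5 * Real.exp (5 * t₀) = s := by
    rw [hexp]; field_simp
  have ht₀neg : t₀ < 0 := by
    have : Real.log (5 * s / Real.pi ^ 2) < 0 :=
      Real.log_neg harg (by rw [div_lt_one (by positivity)]; nlinarith)
    rw [ht₀def]; linarith
  have hset : {t : ℝ | ENNReal.ofReal s
        < volume {x ∈ ball (0 : Cn 2) 1 | u19 x < ((t:ℝ) : EReal)}} = Set.Ioi t₀ := by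
    ext t
    simp only [Set.mem_setOf_eq, Set.mem_Ioi]
    constructor
    · intro h
      by_contra hc
      push_neg at hc
      have htneg : t < 0 := lt_of_le_of_lt hc ht₀neg
      rw [vol_exp t htneg] at h
      have hle : Real.pi ^ 2 / 5 * Real.exp (5 * t) ≤ s := by
        rw [← hval]
        have := Real.exp_le_exp.2 (show 5*t ≤ 5*t₀ by linarith)
        nlinarith
      exact absurd h (not_lt.2 (ENNReal.ofReal_le_ofReal hle))
    · intro h
      rcases lt_or_ge t 0 with htneg | htpos
      · rw [vol_exp t htneg]
        apply (ENNReal.ofReal_lt_ofReal_iff (by positivity)).2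
        rw [← hval]
        have := Real.exp_lt_exp.2 (show 5*t₀ < 5*t by linarith)
        nlinarith
      · exact lt_vol_of t s hs0.le hs htpos
  rw [rearrE, hset, sInf_image_Ioi]

lemma schwarz_val (x : Cn 2) (hx0 : x ≠ 0) (hx : ‖x‖ ^ 4 < 2/5) :
    schwarzE u19 (ball (0 : Cn 2) 1) x
      = (((1/5) * Real.log (5/2 * ‖x‖ ^ 4) : ℝ) : EReal) := by
  have hpi := Real.pi_pos
  have hn : 0 < ‖x‖ := norm_pos_iff.2 hx0
  have hlt : Real.pi ^ 2 / 2 * ‖x‖ ^ 4 < Real.pi ^ 2 / 5 := by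
    have key := mul_lt_mul_of_pos_left hx (show (0:ℝ) < Real.pi ^ 2 / 2 by positivity)
    linarith
  rw [schwarzE, volB ‖x‖ hn, ENNReal.toReal_ofReal (by positivity),
    rearr_val _ (by positivity) hlt]
  congr 2
  rw [show 5 * (Real.pi ^ 2 / 2 * ‖x‖ ^ 4) / Real.pi ^ 2 = 5/2 * ‖x‖ ^ 4 by
    field_simp]

lemma sup_val (r : ℝ) (h0 : 0 < r) (hr : r < 1/2) :
    (⨆ w ∈ ball (0 : Cn 2) r, schwarzE u19 (ball (0 : Cn 2) 1) w)
      = (((1/5) * Real.log (5/2 * r ^ 4) : ℝ) : EReal) := by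
  set T := (1/5) * Real.log (5/2 * r ^ 4) with hTdef
  have hr4 : r ^ 4 < 1/16 := by
    have := pow_lt_pow_left₀ hr h0.le (by norm_num : 4 ≠ 0)
    norm_num at this
    linarith
  have hargpos : 0 < 5/2 * r ^ 4 := by positivity
  have hTneg : T < 0 := by
    have : Real.log (5/2 * r ^ 4) < 0 := Real.log_neg hargpos (by nlinarith)
    rw [hTdef]; linarith
  have hexpT : Real.exp (5 * T) = 5/2 * r ^ 4 := by
    rw [show 5 * T = Real.log (5/2 * r ^ 4) by rw [hTdef]; ring, Real.exp_log hargpos]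
  apply le_antisymm
  · apply iSup₂_le
    intro w hw
    have hwn : ‖w‖ < r := by simpa [dist_zero_right] using hw
    by_cases hw0 : w = 0
    · subst hw0
      rw [schwarzE, norm_zero, Metric.ball_zero, measure_empty, ENNReal.toReal_zero, rearrE]
      apply sInf_le
      refine ⟨T, ?_, rfl⟩
      show ENNReal.ofReal 0 < _
      rw [ENNReal.ofReal_zero, vol_exp T hTneg]
      exact ENNReal.ofReal_pos.2 (by positivity)
    · have hwr : ‖w‖ < 1/2 := lt_trans hwn hr
      have h4 : ‖w‖ ^ 4 < 2/5 := by
        have := pow_lt_pow_left₀ hwr (norm_nonneg w) (by norm_num : 4 ≠ 0)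
        norm_num at this
        linarith
      rw [schwarz_val w hw0 h4]
      apply EReal.coe_le_coe_iff.2
      rw [hTdef]
      have hlog : Real.log (5/2 * ‖w‖ ^ 4) ≤ Real.log (5/2 * r ^ 4) := by
        apply Real.log_le_log (mul_pos (by norm_num) (pow_pos (norm_pos_iff.2 hw0) 4))
        nlinarith [norm_nonneg w, pow_le_pow_left₀ (norm_nonneg w) hwn.le 4]
      linarith
  · apply le_of_forall_lt
    intro c hc
    obtain ⟨tR, htR1, htR2⟩ := EReal.exists_between_coe_real hc
    have htRT : tR < T := EReal.coe_lt_coe_iff.1 htR2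
    set a := 2/5 * Real.exp (5 * tR) with hadef
    have ha0 : 0 < a := by positivity
    have haT : a < r ^ 4 := by
      have := Real.exp_lt_exp.2 (show 5 * tR < 5 * T by linarith)
      rw [hexpT] at this
      rw [hadef]; nlinarith
    set m := (a + r ^ 4)/2 with hmdef
    have hm0 : 0 < m := by rw [hmdef]; positivity
    have ham : a < m := by rw [hmdef]; linarith
    have hmr : m < r ^ 4 := by rw [hmdef]; linarith
    set ρ := Real.sqrt (Real.sqrt m) with hρdef
    have hρ4 : ρ ^ 4 = m := by
      rw [hρdef, show Real.sqrt (Real.sqrt m) ^ 4 = (Real.sqrt (Real.sqrt m) ^ 2) ^ 2 by ring,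
        Real.sq_sqrt (Real.sqrt_nonneg m), Real.sq_sqrt hm0.le]
    have hρpos : 0 < ρ := Real.sqrt_pos.2 (Real.sqrt_pos.2 hm0)
    have hρr : ρ < r := by
      by_contra hcon
      push_neg at hcon
      have := pow_le_pow_left₀ h0.le hcon 4
      rw [hρ4] at this
      linarith
    set w : Cn 2 := ρ • EuclideanSpace.single (0 : Fin 2) (1:ℂ) with hwdef
    have hwnorm : ‖w‖ = ρ := by
      rw [hwdef, norm_smul, EuclideanSpace.norm_single]
      simp [abs_of_pos hρpos]
    have hw0 : w ≠ 0 := by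
      intro h
      rw [h, norm_zero] at hwnorm
      exact hρpos.ne hwnorm
    have hw4 : ‖w‖ ^ 4 < 2/5 := by
      rw [hwnorm, hρ4]
      nlinarith
    have hwmem : w ∈ ball (0 : Cn 2) r := by
      rw [mem_ball, dist_zero_right, hwnorm]; exact hρr
    have hval := schwarz_val w hw0 hw4
    have hlt : tR < (1/5) * Real.log (5/2 * ‖w‖ ^ 4) := by
      rw [hwnorm, hρ4]
      have h5 : 5 * tR < Real.log (5/2 * m) :=
        (Real.lt_log_iff_exp_lt (by positivity)).2 (by rw [hadef] at ham; nlinarith)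
      linarith
    calc c < (tR : EReal) := htR1
      _ < schwarzE u19 (ball (0 : Cn 2) 1) w := by
          rw [hval]; exact EReal.coe_lt_coe_iff.2 hlt
      _ ≤ _ := le_iSup₂ (f := fun w (_ : w ∈ ball (0 : Cn 2) r) =>
          schwarzE u19 (ball (0 : Cn 2) 1) w) w hwmem

lemma part3 : Tendsto (fun R : ℝ =>
      2 * Real.log R / ((1 / 4) * Real.log
        ((volume {z ∈ ball (0 : Cn 2) 1 | u19 z < ((2 * Real.log R : ℝ) : EReal)}).toReal)))
    (𝓝[>] (0 : ℝ)) (𝓝 (4 / 5)) := by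
  have key := tendsto_ratio 0 2 ((1/4) * Real.log (Real.pi ^ 2 / 5)) (10/4) (by norm_num)
  rw [show (2:ℝ)/(10/4) = 4/5 by norm_num] at key
  refine Tendsto.congr' ?_ (key.comp Real.tendsto_log_nhdsGT_zero)
  filter_upwards [Ioo_mem_nhdsGT (show (0:ℝ) < 1 by norm_num)] with R hR
  have hvol : ((volume {z ∈ ball (0 : Cn 2) 1 |
      u19 z < ((2 * Real.log R : ℝ) : EReal)}).toReal) = Real.pi ^ 2 / 5 * R ^ 10 := by
    rw [vol_sublevel R hR.1 hR.2, int_val, ENNReal.toReal_ofReal (by positivity)]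
  simp only [Function.comp]
  rw [hvol, Real.log_mul (by positivity) (pow_ne_zero _ hR.1.ne'), Real.log_pow]
  push_cast
  rw [zero_add]
  congr 1
  ring

lemma part4 : lelong (schwarzE u19 (ball (0 : Cn 2) 1)) 0 = 4 / 5 := by
  rw [lelong]
  have heq : ∀ᶠ r in 𝓝[>] (0:ℝ),
      (⨆ w ∈ ball (0 : Cn 2) r, schwarzE u19 (ball (0 : Cn 2) 1) w).toReal / Real.log r
        = ((1/5) * Real.log (5/2 * r ^ 4)) / Real.log r := by
    filter_upwards [Ioo_mem_nhdsGT (show (0:ℝ) < 1/2 by norm_num)] with r hrr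
    rw [sup_val r hrr.1 hrr.2, EReal.toReal_coe]
  rw [liminf_congr heq]
  apply Tendsto.liminf_eq
  have key := tendsto_ratio ((1/5) * Real.log (5/2)) (4/5) 0 1 one_pos
  rw [show ((4:ℝ)/5)/1 = 4/5 by norm_num] at key
  refine Tendsto.congr' ?_ (key.comp Real.tendsto_log_nhdsGT_zero)
  filter_upwards [Ioo_mem_nhdsGT (show (0:ℝ) < 1/2 by norm_num)] with r hrr
  simp only [Function.comp]
  rw [Real.log_mul (by norm_num) (pow_ne_zero _ hrr.1.ne'), Real.log_pow]
  push_cast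
  rw [zero_add, one_mul]
  congr 1
  ring

/-- for `u(z) = log(|z₁|² + |z₂|^{1/2})` on the unit ball of `ℂ²`, the
sublevel set `{u < 2 log R}` has volume `2π² ∫₀^R (R²−r²)⁴ r dr = (π²/5) R¹⁰`, and
consequently the Lelong number of the Schwarz symmetrization at the origin is `4/5`. -/
theorem stmt19 :
    (∀ R : ℝ, 0 < R → R < 1 →
      volume {z ∈ ball (0 : Cn 2) 1 | u19 z < ((2 * Real.log R : ℝ) : EReal)}
        = ENNReal.ofReal (2 * Real.pi ^ 2 * ∫ r in (0 : ℝ)..R, (R ^ 2 - r ^ 2) ^ 4 * r)) ∧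
    (∀ R : ℝ, 2 * Real.pi ^ 2 * (∫ r in (0 : ℝ)..R, (R ^ 2 - r ^ 2) ^ 4 * r)
        = Real.pi ^ 2 / 5 * R ^ 10) ∧
    Tendsto (fun R : ℝ =>
        2 * Real.log R / ((1 / 4) * Real.log
          ((volume {z ∈ ball (0 : Cn 2) 1 | u19 z < ((2 * Real.log R : ℝ) : EReal)}).toReal)))
      (𝓝[>] (0 : ℝ)) (𝓝 (4 / 5)) ∧
    lelong (schwarzE u19 (ball (0 : Cn 2) 1)) 0 = 4 / 5 := by
  exact ⟨fun R hR0 hR1 => vol_sublevel R hR0 hR1, fun R => int_val R, part3, part4⟩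

end
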